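/- Let L₁ ⊆ ℤⁿ be an integer lattice of the 'NO-instance' type: every nonzero v ∈ L₁ has at least d nonzero coordinates, or all coordinates of v are even and at least d/4 are nonzero, or all coordinates of v are even and ‖v‖₂ ≥ d. Then for any lattice L₂, λ₁(L₁ ⊗ L₂) ≥ √d · λ₁(L₂). -/

import Mathlib

open Matrix Kronecker
open scoped ENNReal

noncomputable def lambdaOne (p : ℝ≥0∞) {n m : Type} [Fintype n] [Fintype m]
    (B : Matrix n m ℝ) : ℝ :=
  sInf {t : ℝ | ∃ x : m → ℤ, B.mulVec (fun j => (x j : ℝ)) ≠ 0 ∧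
    t = ‖(WithLp.equiv p (n → ℝ)).symm (B.mulVec (fun j => (x j : ℝ)))‖}

section HavivRegevHelpers

open MeasureTheory Module ZSpan




section Helpers

/-- Quadratic form of a Gram matrix is a sum of squares. -/
lemma quad_eq_sum_sq {a b : ℕ} (M : Matrix (Fin a) (Fin b) ℝ) (v : Fin b → ℝ) :
    v ⬝ᵥ (Mᵀ * M).mulVec v = ∑ j, (M.mulVec v j) ^ 2 := by
  rw [← Matrix.mulVec_mulVec, Matrix.dotProduct_mulVec, Matrix.vecMul_transpose]
  simp [dotProduct, sq]

/-- Integer injectivity gives a nonzero Gram determinant. -/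
lemma gram_det_ne_zero {a b : ℕ} (M : Matrix (Fin a) (Fin b) ℤ)
    (h : ∀ z : Fin b → ℤ, z ≠ 0 → M.mulVec z ≠ 0) : (Mᵀ * M).det ≠ 0 := by
  intro hdet
  obtain ⟨v, hv, hMv⟩ := Matrix.exists_mulVec_eq_zero_iff.mpr hdet
  apply h v hv
  have h2 : (M.mulVec v) ⬝ᵥ (M.mulVec v) = 0 := by
    have h3 : v ⬝ᵥ (Mᵀ * M).mulVec v = 0 := by rw [hMv]; simp
    rwa [← Matrix.mulVec_mulVec, Matrix.dotProduct_mulVec, Matrix.vecMul_transpose] at h3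
  exact dotProduct_self_eq_zero.mp h2

/-- Real injectivity gives a positive definite Gram matrix. -/
lemma posDef_gram {a b : ℕ} (M : Matrix (Fin a) (Fin b) ℝ)
    (h : ∀ v : Fin b → ℝ, v ≠ 0 → M.mulVec v ≠ 0) : (Mᵀ * M).PosDef := by
  refine Matrix.PosDef.of_dotProduct_mulVec_pos
    (by simpa using Matrix.isHermitian_conjTranspose_mul_self M) fun x hx => ?_
  have hq : x ⬝ᵥ (Mᵀ * M).mulVec x = ∑ j, (M.mulVec x j) ^ 2 := quad_eq_sum_sq M x
  have hMx := h x hx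
  have : ∃ j, M.mulVec x j ≠ 0 := by
    by_contra hc
    push_neg at hc
    exact hMx (funext hc)
  obtain ⟨j, hj⟩ := this
  have : 0 < ∑ j, (M.mulVec x j) ^ 2 :=
    Finset.sum_pos' (fun i _ => sq_nonneg _) ⟨j, Finset.mem_univ j, by positivity⟩
  simpa [hq] using this

end Helpers

open scoped MatrixOrder in
noncomputable def Matrix.PosSemidef.sqrt {n : Type*} [Fintype n] [DecidableEq n]
    {A : Matrix n n ℝ} (_hA : A.PosSemidef) : Matrix n n ℝ := CFC.sqrt A

open scoped MatrixOrder in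
lemma Matrix.PosSemidef.posSemidef_sqrt {n : Type*} [Fintype n] [DecidableEq n]
    {A : Matrix n n ℝ} (hA : A.PosSemidef) : hA.sqrt.PosSemidef :=
  (CFC.sqrt_nonneg A).posSemidef

open scoped MatrixOrder in
lemma Matrix.PosSemidef.sqrt_mul_self {n : Type*} [Fintype n] [DecidableEq n]
    {A : Matrix n n ℝ} (hA : A.PosSemidef) : hA.sqrt * hA.sqrt = A :=
  CFC.sqrt_mul_sqrt_self A hA.nonneg

-- countability of the standard integer lattice in  `Fin ρ → ℝ`
lemma countable_zspan (ρ : ℕ) :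
    Countable ↥(Submodule.span ℤ (Set.range (Pi.basisFun ℝ (Fin ρ)))).toAddSubgroup := by
  have hsurj : Function.Surjective
      (fun z : Fin ρ → ℤ =>
        (⟨∑ i, z i • (Pi.basisFun ℝ (Fin ρ)) i, Submodule.sum_mem _ fun i _ =>
          Submodule.smul_mem _ _ (Submodule.subset_span (Set.mem_range_self i))⟩ :
          ↥(Submodule.span ℤ (Set.range (Pi.basisFun ℝ (Fin ρ)))))) := by
    rintro ⟨v, hv⟩
    obtain ⟨c, hc⟩ := (Finsupp.mem_span_range_iff_exists_finsupp).mp hv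
    refine ⟨c, ?_⟩
    ext : 1
    simp only
    rw [← hc]
    rw [Finsupp.sum_fintype]
    · simp
  exact hsurj.countable

/-- Minkowski bound: if a positive-definite quadratic form has all its nonzero integer
values at least `R`, then its determinant is at least `(R/ρ)^ρ`. -/
lemma det_lower_of_int_min {ρ : ℕ} (hρ : 0 < ρ) {Γ : Matrix (Fin ρ) (Fin ρ) ℝ}
    (hPD : Γ.PosDef) {R : ℝ} (hR0 : 0 ≤ R)
    (hmin : ∀ z : Fin ρ → ℤ, z ≠ 0 →
      R ≤ (fun i => (z i : ℝ)) ⬝ᵥ Γ.mulVec (fun i => (z i : ℝ))) :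
    (R / ρ) ^ ρ ≤ Γ.det := by
  rcases eq_or_lt_of_le hR0 with hR | hR
  · have : (R / ρ) ^ ρ = 0 := by
      rw [← hR]; simp [zero_pow hρ.ne']
    rw [this]; exact le_of_lt hPD.det_pos
  by_contra hcon
  push_neg at hcon
  -- square root of the matrix
  set S := hPD.posSemidef.sqrt with hSdef
  have hSpsd : S.PosSemidef := hPD.posSemidef.posSemidef_sqrt
  have hSh : Sᵀ = S := by
    have := hSpsd.1
    rwa [Matrix.IsHermitian, Matrix.conjTranspose_eq_transpose_of_trivial] at this
  have hSS : S * S = Γ := hPD.posSemidef.sqrt_mul_self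
  have hdetS_sq : S.det * S.det = Γ.det := by rw [← Matrix.det_mul, hSS]
  have hdetS_nonneg : 0 ≤ S.det := by
    rw [hSpsd.1.det_eq_prod_eigenvalues]
    exact Finset.prod_nonneg fun i _ => by
      simpa using hSpsd.eigenvalues_nonneg i
  have hdetΓ_pos : 0 < Γ.det := hPD.det_pos
  have hdetS_pos : 0 < S.det := by
    rcases eq_or_lt_of_le hdetS_nonneg with h | h
    · exfalso; rw [← hdetS_sq, ← h] at hdetΓ_pos; simp at hdetΓ_pos
    · exact h
  -- quadratic form as a sum of squares through S
  have hquad : ∀ v : Fin ρ → ℝ, v ⬝ᵥ Γ.mulVec v = ∑ j, (S.mulVec v j) ^ 2 := by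
    intro v
    have := quad_eq_sum_sq S v
    rwa [hSh, hSS] at this
  -- the linear map
  set f : (Fin ρ → ℝ) →ₗ[ℝ] (Fin ρ → ℝ) := Matrix.toLin' S with hfdef
  have hdetf : LinearMap.det f = S.det := LinearMap.det_toLin' S
  have hdetf_ne : LinearMap.det f ≠ 0 := by rw [hdetf]; exact ne_of_gt hdetS_pos
  -- the ellipsoid
  set B : Set (Fin ρ → ℝ) := {y | ∑ i, (y i) ^ 2 < R} with hBdef
  set s : Set (Fin ρ → ℝ) := f ⁻¹' B with hsdef
  -- convexity of B
  have hBconv : Convex ℝ B := by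
    intro u hu v hv a b ha hb hab
    simp only [hBdef, Set.mem_setOf_eq] at hu hv ⊢
    have hper : ∀ i, (a • u + b • v) i ^ 2 ≤ a * (u i) ^ 2 + b * (v i) ^ 2 := by
      intro i
      have := (Even.convexOn_pow (n := 2) even_two).2 (Set.mem_univ (u i))
        (Set.mem_univ (v i)) ha hb hab
      simpa [smul_eq_mul] using this
    calc ∑ i, ((a • u + b • v) i) ^ 2 ≤ ∑ i, (a * (u i) ^ 2 + b * (v i) ^ 2) :=
          Finset.sum_le_sum fun i _ => hper i
      _ = a * (∑ i, (u i) ^ 2) + b * (∑ i, (v i) ^ 2) := by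
          rw [Finset.sum_add_distrib, Finset.mul_sum, Finset.mul_sum]
      _ ≤ a * max (∑ i, (u i) ^ 2) (∑ i, (v i) ^ 2)
            + b * max (∑ i, (u i) ^ 2) (∑ i, (v i) ^ 2) := by
          gcongr <;> [exact le_max_left _ _; exact le_max_right _ _]
      _ = max (∑ i, (u i) ^ 2) (∑ i, (v i) ^ 2) := by rw [← add_mul, hab, one_mul]
      _ < R := max_lt hu hv
  have hsconv : Convex ℝ s := hBconv.linear_preimage f
  have hssymm : ∀ y ∈ s, -y ∈ s := by
    intro y hy
    simp only [hsdef, Set.mem_preimage, map_neg, hBdef, Set.mem_setOf_eq] at hy ⊢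
    simpa using hy
  -- the cube inside B
  set aa : ℝ := Real.sqrt (R / ρ) with haadef
  have hρR : (0:ℝ) < ρ := by exact_mod_cast hρ
  have haa_pos : 0 < aa := Real.sqrt_pos.mpr (div_pos hR hρR)
  have haa_sq : aa ^ 2 = R / ρ := Real.sq_sqrt (le_of_lt (div_pos hR hρR))
  have hcube_sub : (Set.pi Set.univ fun _ : Fin ρ => Set.Ioo (-aa) aa) ⊆ B := by
    intro y hy
    simp only [Set.mem_pi, Set.mem_univ, Set.mem_Ioo, forall_true_left] at hy
    simp only [hBdef, Set.mem_setOf_eq]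
    have hlt : ∀ i, (y i) ^ 2 < aa ^ 2 := by
      intro i
      exact sq_lt_sq' (hy i).1 (hy i).2
    calc ∑ i, (y i) ^ 2 < ∑ _i : Fin ρ, aa ^ 2 :=
          Finset.sum_lt_sum_of_nonempty (Finset.univ_nonempty_iff.mpr ⟨⟨0, hρ⟩⟩)
            fun i _ => hlt i
      _ = ρ * aa ^ 2 := by rw [Finset.sum_const, Finset.card_univ, Fintype.card_fin,
            nsmul_eq_mul]
      _ = R := by rw [haa_sq]; field_simp
  -- volume of the cube
  have hvol_cube : volume (Set.pi Set.univ fun _ : Fin ρ => Set.Ioo (-aa) aa)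
      = ENNReal.ofReal ((2 * aa) ^ ρ) := by
    rw [volume_pi_pi]
    simp only [Real.volume_Ioo]
    rw [Finset.prod_const, Finset.card_univ, Fintype.card_fin, ← ENNReal.ofReal_pow
      (by linarith)]
    congr 1
    ring
  -- volume of B
  have hvolB : ENNReal.ofReal ((2 * aa) ^ ρ) ≤ volume B :=
    hvol_cube ▸ measure_mono hcube_sub
  -- volume of s
  have hvols : volume s = ENNReal.ofReal |(S.det)⁻¹| * volume B := by
    rw [hsdef, volume.addHaar_preimage_linearMap hdetf_ne, hdetf]
  -- the lattice and fundamental domain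
  have hfund := ZSpan.isAddFundamentalDomain' (Pi.basisFun ℝ (Fin ρ)) volume
  have hcnt : Countable
      ↥(Submodule.span ℤ (Set.range (Pi.basisFun ℝ (Fin ρ)))).toAddSubgroup :=
    countable_zspan ρ
  have hvolF : volume (ZSpan.fundamentalDomain (Pi.basisFun ℝ (Fin ρ))) = 1 := by
    rw [ZSpan.volume_fundamentalDomain]
    have : (Matrix.of ⇑(Pi.basisFun ℝ (Fin ρ))) = (1 : Matrix (Fin ρ) (Fin ρ) ℝ) := by
      ext i j
      simp [Matrix.one_apply, Pi.single_apply, eq_comm]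
    rw [this]
    simp
  -- the measure inequality
  have hkey : volume (ZSpan.fundamentalDomain (Pi.basisFun ℝ (Fin ρ)))
      * 2 ^ (finrank ℝ (Fin ρ → ℝ)) < volume s := by
    rw [hvolF, one_mul, finrank_pi ℝ, Fintype.card_fin]
    have hreal : (2:ℝ) ^ ρ < (S.det)⁻¹ * (2 * aa) ^ ρ := by
      have hSa : S.det < aa ^ ρ := by
        have hpow : (R / (ρ:ℝ)) ^ ρ = aa ^ ρ * aa ^ ρ := by
          rw [← haa_sq, ← pow_mul, two_mul, pow_add]
        nlinarith [hdetS_nonneg, pow_nonneg haa_pos.le ρ, hcon, hdetS_sq]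
      have h2p : (0:ℝ) < 2 ^ ρ := by positivity
      rw [mul_pow, show (S.det)⁻¹ * ((2:ℝ) ^ ρ * aa ^ ρ) = 2 ^ ρ * (aa ^ ρ / S.det) by
        field_simp]
      have hgt1 : 1 < aa ^ ρ / S.det := (one_lt_div hdetS_pos).mpr hSa
      nlinarith
    calc (2:ℝ≥0∞) ^ ρ = ENNReal.ofReal ((2:ℝ) ^ ρ) := by
          rw [ENNReal.ofReal_pow (by norm_num)]
          norm_num
      _ < ENNReal.ofReal ((S.det)⁻¹ * (2 * aa) ^ ρ) := by
          apply ENNReal.ofReal_lt_ofReal_iff_of_nonneg (by positivity) |>.mpr hreal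
      _ = ENNReal.ofReal ((S.det)⁻¹) * ENNReal.ofReal ((2 * aa) ^ ρ) := by
          rw [ENNReal.ofReal_mul (by positivity)]
      _ ≤ ENNReal.ofReal |(S.det)⁻¹| * volume B := by
          gcongr
          · rw [abs_of_nonneg (by positivity)]
      _ = volume s := hvols.symm
  -- apply Minkowski
  obtain ⟨x, hx0, hxs⟩ :=
    exists_ne_zero_mem_lattice_of_measure_mul_two_pow_lt_measure hfund hssymm hsconv hkey
  -- extract integer coordinates
  have hintco : ∀ i, ∃ zi : ℤ, (x : Fin ρ → ℝ) i = zi := by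
    have hmem : (x : Fin ρ → ℝ) ∈ Submodule.span ℤ (Set.range (Pi.basisFun ℝ (Fin ρ))) :=
      x.2
    refine Submodule.span_induction ?_ ?_ ?_ ?_ hmem
    · rintro v ⟨j, rfl⟩ i
      by_cases h : i = j
      · exact ⟨1, by simp [h]⟩
      · exact ⟨0, by simp [Pi.basisFun_apply, Pi.single_apply, h]⟩
    · intro i; exact ⟨0, by simp⟩
    · rintro u v _ _ hu hv i
      obtain ⟨zu, hzu⟩ := hu i
      obtain ⟨zv, hzv⟩ := hv i
      exact ⟨zu + zv, by simp [hzu, hzv]⟩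
    · rintro m u _ hu i
      obtain ⟨zu, hzu⟩ := hu i
      exact ⟨m * zu, by simp [hzu]⟩
  choose z hz using hintco
  have hzne : z ≠ 0 := by
    intro hzz
    apply hx0
    have : (x : Fin ρ → ℝ) = 0 := by
      funext i
      rw [hz i, hzz]
      simp
    exact Subtype.ext this
  -- contradiction with the minimum
  have hxB : f (x : Fin ρ → ℝ) ∈ B := hxs
  have hval : (fun i => (z i : ℝ)) ⬝ᵥ Γ.mulVec (fun i => (z i : ℝ)) < R := by
    have hxz : (x : Fin ρ → ℝ) = fun i => (z i : ℝ) := funext hz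
    rw [← hxz, hquad]
    simpa [hfdef, Matrix.toLin'_apply, hBdef] using hxB
  exact absurd (hmin z hzne) (not_le.mpr hval)

/-- Trace of a real hermitian matrix is the sum of its eigenvalues. -/
lemma trace_eq_sum_eigenvalues' {ρ : ℕ} {A : Matrix (Fin ρ) (Fin ρ) ℝ}
    (hA : A.IsHermitian) : A.trace = ∑ i, hA.eigenvalues i := by
  nth_rewrite 1 [hA.spectral_theorem]
  rw [Unitary.conjStarAlgAut_apply]
  rw [mul_assoc, Matrix.trace_mul_comm, mul_assoc]
  have hU : (star (hA.eigenvectorUnitary : Matrix (Fin ρ) (Fin ρ) ℝ))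
      * (hA.eigenvectorUnitary : Matrix (Fin ρ) (Fin ρ) ℝ) = 1 := by
    simpa using (Unitary.mem_iff.mp hA.eigenvectorUnitary.2).1
  rw [hU, mul_one, Matrix.trace_diagonal]
  simp

/-- AM–GM for a product of two positive (semi)definite matrices. -/
lemma det_mul_det_le_trace_div_pow {ρ : ℕ} (hρ : 0 < ρ) {Γ S : Matrix (Fin ρ) (Fin ρ) ℝ}
    (hΓ : Γ.PosDef) (hS : S.PosSemidef) :
    Γ.det * S.det ≤ ((Γ * S).trace / ρ) ^ ρ := by
  set Rt := hΓ.posSemidef.sqrt with hRt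
  have hRtpsd : Rt.PosSemidef := hΓ.posSemidef.posSemidef_sqrt
  have hRth : Rtᴴ = Rt := hRtpsd.1
  have hRtRt : Rt * Rt = Γ := hΓ.posSemidef.sqrt_mul_self
  have hH : (Rt * S * Rt).PosSemidef := by
    have := hS.mul_mul_conjTranspose_same Rt
    rwa [hRth] at this
  have htrace : (Rt * S * Rt).trace = (Γ * S).trace := by
    rw [Matrix.trace_mul_comm, ← mul_assoc, hRtRt]
  have hdet : (Rt * S * Rt).det = Γ.det * S.det := by
    rw [Matrix.det_mul, Matrix.det_mul]
    have h : Rt.det * Rt.det = Γ.det := by rw [← Matrix.det_mul, hRtRt]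
    rw [← h]; ring
  have hHh : (Rt * S * Rt).IsHermitian := hH.1
  set μ := hHh.eigenvalues with hμ
  have hμnn : ∀ i, 0 ≤ μ i := fun i => hH.eigenvalues_nonneg i
  have htr_eig : (Rt * S * Rt).trace = ∑ i, μ i := trace_eq_sum_eigenvalues' hHh
  have hdet_eig : (Rt * S * Rt).det = ∏ i, μ i := by
    rw [hHh.det_eq_prod_eigenvalues]; norm_num; rfl
  -- AM-GM
  have hamgm : (∏ i, μ i) ^ ((ρ:ℝ)⁻¹) ≤ ∑ i, ((ρ:ℝ)⁻¹) * μ i := by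
    have := Real.geom_mean_le_arith_mean_weighted Finset.univ (fun _ => (ρ:ℝ)⁻¹) μ
      (fun i _ => by positivity)
      (by simp [Finset.card_univ]; field_simp)
      (fun i _ => hμnn i)
    rwa [Real.finset_prod_rpow Finset.univ μ (fun i _ => hμnn i) ((ρ:ℝ)⁻¹)] at this
  have hsum : ∑ i, ((ρ:ℝ)⁻¹) * μ i = (Γ * S).trace / ρ := by
    rw [← Finset.mul_sum, ← htr_eig, htrace]
    ring
  have hprod_nn : 0 ≤ ∏ i, μ i := Finset.prod_nonneg fun i _ => hμnn i
  have hfinal : (∏ i, μ i) ≤ ((Γ * S).trace / ρ) ^ ρ := by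
    have h1 : ((∏ i, μ i) ^ ((ρ:ℝ)⁻¹)) ^ (ρ:ℕ) ≤ ((Γ * S).trace / ρ) ^ ρ := by
      apply pow_le_pow_left₀ (by positivity)
      rw [← hsum]; exact hamgm
    rwa [← Real.rpow_natCast ((∏ i, μ i) ^ ((ρ:ℝ)⁻¹)) ρ, ← Real.rpow_mul hprod_nn,
      inv_mul_cancel₀ (by exact_mod_cast hρ.ne'), Real.rpow_one] at h1
  rw [← hdet, hdet_eig]
  exact hfinal

/-- Casting commutes with `mulVec`. -/
lemma cast_mulVec {a b : ℕ} (M : Matrix (Fin a) (Fin b) ℤ) (v : Fin b → ℤ) :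
    (M.map (fun z : ℤ => (z : ℝ))).mulVec (fun i => (v i : ℝ))
      = fun i => ((M.mulVec v i : ℤ) : ℝ) := by
  funext i
  simp only [Matrix.mulVec, dotProduct, Matrix.map_apply]
  push_cast
  rfl

/-- Integer injectivity implies real injectivity for integer matrices. -/
lemma real_inj_of_int_inj {a b : ℕ} (M : Matrix (Fin a) (Fin b) ℤ)
    (h : ∀ z : Fin b → ℤ, z ≠ 0 → M.mulVec z ≠ 0) :
    ∀ v : Fin b → ℝ, v ≠ 0 → (M.map (fun z : ℤ => (z : ℝ))).mulVec v ≠ 0 := by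
  intro v hv hMv
  have hdet := gram_det_ne_zero M h
  have hmapmul : (M.map (fun z : ℤ => (z : ℝ)))ᵀ * (M.map (fun z : ℤ => (z : ℝ)))
      = (Mᵀ * M).map (fun z : ℤ => (z : ℝ)) := by
    rw [show (fun z : ℤ => (z : ℝ)) = ⇑(Int.castRingHom ℝ) from rfl]
    rw [Matrix.map_mul, Matrix.transpose_map]
  have hdetr : ((M.map (fun z : ℤ => (z : ℝ)))ᵀ * (M.map (fun z : ℤ => (z : ℝ)))).det ≠ 0 := by
    rw [hmapmul, show (fun z : ℤ => (z : ℝ)) = ⇑(Int.castRingHom ℝ) from rfl]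
    show ((Int.castRingHom ℝ).mapMatrix (Mᵀ * M)).det ≠ 0
    rw [← RingHom.map_det]
    simpa using hdet
  apply hv
  apply Matrix.eq_zero_of_mulVec_eq_zero hdetr
  rw [← Matrix.mulVec_mulVec, hMv, Matrix.mulVec_zero]

/-- Sum of squared entries equals the trace of the Gram matrix. -/
lemma sum_sq_eq_trace_gram {a b : ℕ} (M : Matrix (Fin a) (Fin b) ℝ) :
    ∑ i, ∑ j, (M i j) ^ 2 = (Mᵀ * M).trace := by
  rw [Matrix.trace]
  rw [Finset.sum_comm]
  apply Finset.sum_congr rfl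
  intro i _
  simp [Matrix.diag, Matrix.mul_apply, sq]

/-- The key trace identity. -/
lemma sum_sq_eq_trace {nn n₂ ρ : ℕ} (G : Matrix (Fin nn) (Fin ρ) ℝ)
    (W : Matrix (Fin n₂) (Fin ρ) ℝ) :
    ∑ i, ∑ j, (∑ k, G i k * W j k) ^ 2 = ((Gᵀ * G) * (Wᵀ * W)).trace := by
  have h1 : ∀ i j, (∑ k, G i k * W j k) = (G * Wᵀ) i j := by
    intro i j
    simp [Matrix.mul_apply]
  calc ∑ i, ∑ j, (∑ k, G i k * W j k) ^ 2 = ∑ i, ∑ j, ((G * Wᵀ) i j) ^ 2 := by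
        simp_rw [h1]
    _ = ((G * Wᵀ)ᵀ * (G * Wᵀ)).trace := sum_sq_eq_trace_gram _
    _ = ((Gᵀ * G) * (Wᵀ * W)).trace := by
        rw [Matrix.transpose_mul, Matrix.transpose_transpose,
          show (W * Gᵀ) * (G * Wᵀ) = W * ((Gᵀ * G) * Wᵀ) by
            simp only [Matrix.mul_assoc],
          Matrix.trace_mul_comm, Matrix.mul_assoc]

/-- Euclidean norm via `WithLp`. -/
lemma norm_withlp_eq_sqrt {ι : Type*} [Fintype ι] (w : ι → ℝ) :
    ‖(WithLp.equiv 2 (ι → ℝ)).symm w‖ = Real.sqrt (∑ i, (w i) ^ 2) := by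
  rw [EuclideanSpace.norm_eq]
  congr 1
  apply Finset.sum_congr rfl
  intro i _
  rw [WithLp.equiv_symm_apply, WithLp.ofLp_toLp, Real.norm_eq_abs, sq_abs]


end HavivRegevHelpers

set_option maxHeartbeats 2000000 in
theorem lambdaOne_tensor_no_instance {n m₁ n₂ m₂ : ℕ} (d : ℕ)
    (hm₁ : 0 < m₁) (hm₂ : 0 < m₂)
    (B₁ : Matrix (Fin n) (Fin m₁) ℤ) (h₁ : LinearIndependent ℤ B₁.transpose)
    (hNO : ∀ x : Fin m₁ → ℤ, B₁.mulVec x ≠ 0 →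
      d ≤ (Finset.univ.filter fun i => B₁.mulVec x i ≠ 0).card ∨
      ((∀ i, Even (B₁.mulVec x i)) ∧
        (d : ℝ) / 4 ≤ ((Finset.univ.filter fun i => B₁.mulVec x i ≠ 0).card : ℝ)) ∨
      ((∀ i, Even (B₁.mulVec x i)) ∧
        (d : ℝ) ≤ Real.sqrt (∑ i, ((B₁.mulVec x i : ℝ)) ^ 2)))
    (B₂ : Matrix (Fin n₂) (Fin m₂) ℝ) (h₂ : LinearIndependent ℝ B₂.transpose) :
    Real.sqrt d * lambdaOne 2 B₂ ≤
      lambdaOne 2 ((B₁.map (fun a => (a : ℝ))) ⊗ₖ B₂) := by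
  -- notation
  set l2 := lambdaOne 2 B₂ with hl2def
  have hl2nn : 0 ≤ l2 := by
    apply Real.sInf_nonneg
    rintro y ⟨v, -, rfl⟩
    exact norm_nonneg _
  -- B₂ is injective
  have hB₂inj : ∀ v : Fin m₂ → ℝ, B₂.mulVec v = 0 → v = 0 := by
    intro v hv
    funext l
    refine (Fintype.linearIndependent_iff.mp h₂) v ?_ l
    funext j
    have : (∑ l, v l • B₂.transpose l) j = ∑ l, B₂ j l * v l := by
      simp [Matrix.transpose_apply, mul_comm]
    rw [this]
    exact congr_fun hv j
  -- the fundamental sInf bound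
  have hl2sq : ∀ v : Fin m₂ → ℤ, B₂.mulVec (fun j => (v j : ℝ)) ≠ 0 →
      l2 ^ 2 ≤ ∑ j, (B₂.mulVec (fun j => (v j : ℝ)) j) ^ 2 := by
    intro v hv
    have hmem : Real.sqrt (∑ j, (B₂.mulVec (fun j => (v j : ℝ)) j) ^ 2) ∈
        {t : ℝ | ∃ x : Fin m₂ → ℤ, B₂.mulVec (fun j => (x j : ℝ)) ≠ 0 ∧
          t = ‖(WithLp.equiv 2 (Fin n₂ → ℝ)).symm (B₂.mulVec (fun j => (x j : ℝ)))‖} :=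
      ⟨v, hv, (norm_withlp_eq_sqrt _).symm⟩
    have hble : l2 ≤ Real.sqrt (∑ j, (B₂.mulVec (fun j => (v j : ℝ)) j) ^ 2) := by
      apply csInf_le ⟨0, ?_⟩ hmem
      rintro y ⟨w, -, rfl⟩
      exact norm_nonneg _
    have := pow_le_pow_left₀ hl2nn hble 2
    rwa [Real.sq_sqrt (by positivity)] at this
  -- nonemptiness of the tensor set
  have hnonempty : ∃ x : Fin m₁ × Fin m₂ → ℤ,
      ((B₁.map (fun a => (a : ℝ))) ⊗ₖ B₂).mulVec (fun p => (x p : ℝ)) ≠ 0 := by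
    have hcol1 : B₁.transpose ⟨0, hm₁⟩ ≠ 0 := h₁.ne_zero ⟨0, hm₁⟩
    have hcol2 : B₂.transpose ⟨0, hm₂⟩ ≠ 0 := h₂.ne_zero ⟨0, hm₂⟩
    obtain ⟨i₀, hi₀⟩ : ∃ i, B₁ i ⟨0, hm₁⟩ ≠ 0 := by
      by_contra hc; push_neg at hc
      exact hcol1 (funext fun i => hc i)
    obtain ⟨j₀, hj₀⟩ : ∃ j, B₂ j ⟨0, hm₂⟩ ≠ 0 := by
      by_contra hc; push_neg at hc
      exact hcol2 (funext fun j => hc j)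
    refine ⟨fun p => if p = (⟨0, hm₁⟩, ⟨0, hm₂⟩) then 1 else 0, fun hzero => ?_⟩
    have h := congr_fun hzero (i₀, j₀)
    simp only [Matrix.mulVec, dotProduct, Pi.zero_apply] at h
    rw [Finset.sum_eq_single ((⟨0, hm₁⟩ : Fin m₁), (⟨0, hm₂⟩ : Fin m₂))] at h
    · simp only [Matrix.kroneckerMap_apply, Matrix.map_apply, if_true, eq_self_iff_true,
        Int.cast_one, mul_one, Int.cast_ite, Int.cast_zero] at h
      exact mul_ne_zero (Int.cast_ne_zero.mpr hi₀) hj₀ h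
    · intro b _ hb; simp [hb]
    · intro habs; exact absurd (Finset.mem_univ _) habs
  -- main bound
  obtain ⟨x₀, hx₀⟩ := hnonempty
  refine le_csInf ⟨_, ⟨x₀, hx₀, rfl⟩⟩ ?_
  rintro y ⟨x, hx, rfl⟩
  rw [norm_withlp_eq_sqrt]
  set Y : Fin n × Fin n₂ → ℝ :=
    ((B₁.map (fun a => (a : ℝ))) ⊗ₖ B₂).mulVec (fun p => (x p : ℝ)) with hYdef
  suffices hDL : (d:ℝ) * l2 ^ 2 ≤ ∑ p, (Y p) ^ 2 by
    have h1 := Real.sqrt_le_sqrt hDL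
    rwa [Real.sqrt_mul (by positivity), Real.sqrt_sq hl2nn] at h1
  -- ===== setup: the coefficient matrix C and its rows =====
  set C : Matrix (Fin n) (Fin m₂) ℤ := Matrix.of (fun i l => ∑ k, B₁ i k * x (k, l))
    with hCdef
  have hYC : ∀ i j, Y (i, j) = ∑ l, (C i l : ℝ) * B₂ j l := by
    intro i j
    show (∑ q : Fin m₁ × Fin m₂,
      ((B₁.map (fun a => (a : ℝ))) ⊗ₖ B₂) (i, j) q * (x q : ℝ)) = _
    rw [Fintype.sum_prod_type, Finset.sum_comm]
    apply Finset.sum_congr rfl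
    intro l _
    simp only [hCdef, Matrix.of_apply, Int.cast_sum, Int.cast_mul, Finset.sum_mul,
      Matrix.kroneckerMap_apply, Matrix.map_apply]
    apply Finset.sum_congr rfl
    intro k _
    ring
  have hrowY : ∀ i j, Y (i, j) = B₂.mulVec (fun l => (C i l : ℝ)) j := by
    intro i j
    rw [hYC i j]
    simp only [Matrix.mulVec, dotProduct]
    apply Finset.sum_congr rfl
    intro l _
    ring
  have hsumY : ∑ p, (Y p) ^ 2 = ∑ i, ∑ j, (B₂.mulVec (fun l => (C i l : ℝ)) j) ^ 2 := by
    rw [Fintype.sum_prod_type]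
    apply Finset.sum_congr rfl; intro i _
    apply Finset.sum_congr rfl; intro j _
    rw [hrowY i j]
  have hsumY_nn : 0 ≤ ∑ p, (Y p) ^ 2 := by positivity
  -- the set of nonzero rows
  set T : Finset (Fin n) := Finset.univ.filter (fun i => (fun l => C i l) ≠ 0) with hTdef
  -- cast nonzero
  have hcastne : ∀ i, (fun l => C i l) ≠ 0 → (fun l => (C i l : ℝ)) ≠ (0 : Fin m₂ → ℝ) := by
    intro i hi hc
    apply hi
    funext l
    have := congr_fun hc l
    rw [Pi.zero_apply] at this ⊢
    exact_mod_cast this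
  have hrow_ne : ∀ i ∈ T, B₂.mulVec (fun l => (C i l : ℝ)) ≠ 0 := by
    intro i hi hc
    exact hcastne i (Finset.mem_filter.mp hi).2 (hB₂inj _ hc)
  -- per-row lower bound
  have hrow_lb : ∀ i ∈ T, l2 ^ 2 ≤ ∑ j, (B₂.mulVec (fun l => (C i l : ℝ)) j) ^ 2 := by
    intro i hi
    exact hl2sq (fun l => C i l) (hrow_ne i hi)
  -- ===== case split =====
  by_cases hcaseA : (d : ℝ) ≤ T.card
  · -- many nonzero rows
    calc (d : ℝ) * l2 ^ 2 ≤ (T.card : ℝ) * l2 ^ 2 := by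
          exact mul_le_mul_of_nonneg_right hcaseA (by positivity)
      _ = ∑ _i ∈ T, l2 ^ 2 := by rw [Finset.sum_const, nsmul_eq_mul]
      _ ≤ ∑ i ∈ T, ∑ j, (B₂.mulVec (fun l => (C i l : ℝ)) j) ^ 2 :=
          Finset.sum_le_sum hrow_lb
      _ ≤ ∑ i, ∑ j, (B₂.mulVec (fun l => (C i l : ℝ)) j) ^ 2 :=
          Finset.sum_le_sum_of_subset_of_nonneg (Finset.subset_univ T)
            (fun i _ _ => by positivity)
      _ = ∑ p, (Y p) ^ 2 := hsumY.symm
  push_neg at hcaseA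
  have hTlt : (T.card : ℝ) < d := hcaseA
  -- every entry of C is even
  have heven : ∀ i l, Even (C i l) := by
    intro i l
    have hcoleq : ∀ i', C i' l = B₁.mulVec (fun k => x (k, l)) i' := by
      intro i'
      simp [hCdef, Matrix.mulVec, dotProduct]
    by_cases hc0 : B₁.mulVec (fun k => x (k, l)) = 0
    · rw [hcoleq i, hc0]; exact Even.zero
    · rcases hNO (fun k => x (k, l)) hc0 with h1 | h2 | h3
      · exfalso
        have hsub : (Finset.univ.filter fun i' => B₁.mulVec (fun k => x (k, l)) i' ≠ 0)
            ⊆ T := by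
          intro i' hi'
          rw [Finset.mem_filter] at hi' ⊢
          refine ⟨Finset.mem_univ _, fun hzero => ?_⟩
          exact hi'.2 (by rw [← hcoleq i']; exact congr_fun hzero l)
        have := Finset.card_le_card hsub
        have hled : (d : ℝ) ≤ T.card := by
          exact_mod_cast le_trans h1 this
        linarith
      · rw [hcoleq i]; exact h2.1 i
      · rw [hcoleq i]; exact h3.1 i
  by_cases hcaseB : (d : ℝ) ≤ 4 * T.card
  · -- rows are twice lattice vectors
    have hrow_lb4 : ∀ i ∈ T, 4 * l2 ^ 2 ≤ ∑ j, (B₂.mulVec (fun l => (C i l : ℝ)) j) ^ 2 := by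
      intro i hi
      choose r hr using fun l => heven i l
      have hrne : (fun l => r l) ≠ (0 : Fin m₂ → ℤ) := by
        intro hr0
        apply (Finset.mem_filter.mp hi).2
        funext l
        rw [hr l, congr_fun hr0 l]
        simp
      have hmv : ∀ j, B₂.mulVec (fun l => (C i l : ℝ)) j
          = 2 * B₂.mulVec (fun l => (r l : ℝ)) j := by
        intro j
        simp only [Matrix.mulVec, dotProduct, Finset.mul_sum]
        apply Finset.sum_congr rfl
        intro l _
        rw [hr l]
        push_cast
        ring
      have hlat : B₂.mulVec (fun l => (r l : ℝ)) ≠ 0 := by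
        intro hzz
        apply hrow_ne i hi
        funext j
        rw [hmv j, congr_fun hzz j]
        simp
      have := hl2sq (fun l => r l) hlat
      calc 4 * l2 ^ 2 ≤ 4 * ∑ j, (B₂.mulVec (fun l => (r l : ℝ)) j) ^ 2 := by linarith
        _ = ∑ j, (B₂.mulVec (fun l => (C i l : ℝ)) j) ^ 2 := by
            rw [Finset.mul_sum]
            apply Finset.sum_congr rfl
            intro j _
            rw [hmv j]
            ring
    calc (d : ℝ) * l2 ^ 2 ≤ (T.card : ℝ) * (4 * l2 ^ 2) := by nlinarith [sq_nonneg l2]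
      _ = ∑ _i ∈ T, (4 * l2 ^ 2) := by rw [Finset.sum_const, nsmul_eq_mul]
      _ ≤ ∑ i ∈ T, ∑ j, (B₂.mulVec (fun l => (C i l : ℝ)) j) ^ 2 :=
          Finset.sum_le_sum hrow_lb4
      _ ≤ ∑ i, ∑ j, (B₂.mulVec (fun l => (C i l : ℝ)) j) ^ 2 :=
          Finset.sum_le_sum_of_subset_of_nonneg (Finset.subset_univ T)
            (fun i _ _ => by positivity)
      _ = ∑ p, (Y p) ^ 2 := hsumY.symm
  push_neg at hcaseB
  -- ===== case C : few nonzero rows, all lattice vectors long =====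
  -- Y ≠ 0 means C ≠ 0
  have hCne : ∃ l₁ i₁, C i₁ l₁ ≠ 0 := by
    by_contra hc
    push_neg at hc
    apply hx
    funext p
    obtain ⟨i, j⟩ := p
    rw [show Y (i, j) = ∑ l, (C i l : ℝ) * B₂ j l from hYC i j]
    simp only [Pi.zero_apply]
    apply Finset.sum_eq_zero
    intro l _
    rw [hc l i]
    simp
  -- the column span
  set cols : Fin m₂ → (Fin n → ℤ) := fun l i => C i l with hcolsdef
  set M₀ : Submodule ℤ (Fin n → ℤ) := Submodule.span ℤ (Set.range cols) with hM₀def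
  have hcols_mem : ∀ l, cols l ∈ M₀ := fun l => Submodule.subset_span (Set.mem_range_self l)
  have hcols_mulVec : ∀ l, cols l = B₁.mulVec (fun k => x (k, l)) := by
    intro l; funext i
    simp [hcolsdef, hCdef, Matrix.mulVec, dotProduct]
  have hM₀range : ∀ v ∈ M₀, ∃ xv : Fin m₁ → ℤ, B₁.mulVec xv = v := by
    intro v hv
    have hle : M₀ ≤ LinearMap.range B₁.mulVecLin := by
      rw [hM₀def, Submodule.span_le]
      rintro _ ⟨l, rfl⟩
      exact ⟨fun k => x (k, l), (hcols_mulVec l).symm⟩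
    obtain ⟨xv, hxv⟩ := hle hv
    exact ⟨xv, hxv⟩
  have hM₀supp : ∀ v ∈ M₀, ∀ i, i ∉ T → v i = 0 := by
    intro v hv
    refine Submodule.span_induction ?_ ?_ ?_ ?_ hv
    · rintro _ ⟨l, rfl⟩ i hiT
      have hz : (fun l => C i l) = 0 := by
        by_contra hne
        exact hiT (Finset.mem_filter.mpr ⟨Finset.mem_univ _, hne⟩)
      exact congr_fun hz l
    · intro i _; rfl
    · intro u w _ _ hu hw i hi
      rw [Pi.add_apply, hu i hi, hw i hi, add_zero]
    · intro m u _ hu i hi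
      rw [Pi.smul_apply, hu i hi, smul_zero]
  have hd0 : (0:ℝ) ≤ d := Nat.cast_nonneg d
  have hM₀min : ∀ v ∈ M₀, v ≠ 0 → (d:ℝ)^2 ≤ ∑ i, ((v i : ℤ) : ℝ)^2 := by
    intro v hv hvne
    obtain ⟨xv, hxv⟩ := hM₀range v hv
    have hxvne : B₁.mulVec xv ≠ 0 := by rw [hxv]; exact hvne
    have hsupp_sub : (Finset.univ.filter fun i => B₁.mulVec xv i ≠ 0) ⊆ T := by
      intro i hi
      rw [Finset.mem_filter] at hi
      by_contra hiT
      exact hi.2 (by rw [hxv]; exact hM₀supp v hv i hiT)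
    have hcard : ((Finset.univ.filter fun i => B₁.mulVec xv i ≠ 0).card : ℝ) ≤ T.card :=
      Nat.cast_le.mpr (Finset.card_le_card hsupp_sub)
    have hTnn : (0:ℝ) ≤ T.card := Nat.cast_nonneg _
    rcases hNO xv hxvne with h1 | h2 | h3
    · exfalso
      have hh : (d:ℝ) ≤ (Finset.univ.filter fun i => B₁.mulVec xv i ≠ 0).card :=
        Nat.cast_le.mpr h1
      nlinarith
    · exfalso
      nlinarith [h2.2]
    · have h3' := h3.2
      rw [hxv] at h3'
      have h4 := pow_le_pow_left₀ hd0 h3' 2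
      rwa [Real.sq_sqrt (by positivity)] at h4
  -- a basis of the column span
  obtain ⟨ρ, bM⟩ := Submodule.basisOfPid (Pi.basisFun ℤ (Fin n)) M₀
  have hρpos : 0 < ρ := by
    rcases Nat.eq_zero_or_pos ρ with h0 | h
    swap
    · exact h
    exfalso
    obtain ⟨l₁, i₁, hCl⟩ := hCne
    have he : (⟨cols l₁, hcols_mem l₁⟩ : M₀) = 0 := by
      have hs := bM.sum_repr ⟨cols l₁, hcols_mem l₁⟩
      subst h0
      simpa using hs.symm
    apply hCl
    have := congr_arg (fun (v : M₀) => (v : Fin n → ℤ) i₁) he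
    simpa [hcolsdef] using this
  have hρle : (ρ:ℝ) ≤ T.card := by
    let φ : M₀ →ₗ[ℤ] ({i // i ∈ T} → ℤ) :=
      { toFun := fun v => fun i => (v : Fin n → ℤ) i.1
        map_add' := fun u v => rfl
        map_smul' := fun m v => rfl }
    have hφinj : Function.Injective φ := by
      intro u v huv
      apply Subtype.ext
      funext i
      by_cases hiT : i ∈ T
      · exact congr_fun huv ⟨i, hiT⟩
      · rw [hM₀supp u u.2 i hiT, hM₀supp v v.2 i hiT]
    have h1 : Module.finrank ℤ M₀ ≤ Module.finrank ℤ ({i // i ∈ T} → ℤ) :=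
      LinearMap.finrank_le_finrank_of_injective hφinj
    rw [Module.finrank_eq_card_basis bM, Module.finrank_pi] at h1
    have h2 : ρ ≤ T.card := by
      simpa [Fintype.card_coe] using h1
    exact_mod_cast h2
  -- the matrices G and A
  set G : Matrix (Fin n) (Fin ρ) ℤ := Matrix.of (fun i k => (bM k : Fin n → ℤ) i) with hGdef
  set colM : Fin m₂ → M₀ := fun l => ⟨cols l, hcols_mem l⟩ with hcolMdef
  set A : Matrix (Fin ρ) (Fin m₂) ℤ := Matrix.of (fun k l => bM.repr (colM l) k) with hAdef
  have hCGA : ∀ i l, C i l = ∑ k, G i k * A k l := by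
    intro i l
    have h := bM.sum_repr (colM l)
    have hval : ((∑ k, bM.repr (colM l) k • bM k : M₀) : Fin n → ℤ) i
        = ((colM l : M₀) : Fin n → ℤ) i := by rw [h]
    rw [AddSubmonoidClass.coe_finset_sum] at hval
    simp only [Finset.sum_apply, SetLike.val_smul, Pi.smul_apply, smul_eq_mul] at hval
    have hCl : C i l = cols l i := rfl
    rw [hCl, show cols l i = ((colM l : M₀) : Fin n → ℤ) i from rfl, ← hval]
    apply Finset.sum_congr rfl
    intro k _
    simp only [hGdef, hAdef, Matrix.of_apply]
    ring
  have hGspan : ∀ z : Fin ρ → ℤ, G.mulVec z = ((∑ k, z k • bM k : M₀) : Fin n → ℤ) := by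
    intro z
    funext i
    rw [AddSubmonoidClass.coe_finset_sum]
    simp only [Matrix.mulVec, dotProduct, Finset.sum_apply, SetLike.val_smul,
      Pi.smul_apply, smul_eq_mul, hGdef, Matrix.of_apply]
    apply Finset.sum_congr rfl
    intro k _
    ring
  have hGmem : ∀ z : Fin ρ → ℤ, G.mulVec z ∈ M₀ := by
    intro z
    rw [hGspan]
    exact (∑ k, z k • bM k : M₀).2
  have hGinjZ : ∀ z : Fin ρ → ℤ, z ≠ 0 → G.mulVec z ≠ 0 := by
    intro z hz hGz
    apply hz
    have hzero : (∑ k, z k • bM k : M₀) = 0 := by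
      apply Subtype.ext
      rw [← hGspan z, hGz]
      rfl
    funext k
    exact Fintype.linearIndependent_iff.mp bM.linearIndependent z hzero k
  have hAsurj : ∀ yv : Fin ρ → ℤ, ∃ c : Fin m₂ → ℤ, A.mulVec c = yv := by
    intro yv
    have hspan : ((∑ k, yv k • bM k : M₀) : Fin n → ℤ) ∈ Submodule.span ℤ (Set.range cols) :=
      (∑ k, yv k • bM k : M₀).2
    obtain ⟨c, hc⟩ := (Submodule.mem_span_range_iff_exists_fun ℤ).mp hspan
    refine ⟨c, ?_⟩
    have hsum_sub : (∑ l, c l • colM l : M₀) = (∑ k, yv k • bM k : M₀) := by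
      apply Subtype.ext
      rw [AddSubmonoidClass.coe_finset_sum]
      simp only [SetLike.val_smul]
      exact hc
    funext k
    have h1 : A.mulVec c k = bM.repr (∑ l, c l • colM l) k := by
      simp only [Matrix.mulVec, dotProduct, hAdef, Matrix.of_apply]
      rw [map_sum, Finsupp.finset_sum_apply]
      apply Finset.sum_congr rfl
      intro l _
      rw [_root_.map_smul, Finsupp.smul_apply, smul_eq_mul]
      ring
    rw [h1, hsum_sub]
    exact congr_fun (bM.repr_sum_self yv) k
  have hATinjZ : ∀ z : Fin ρ → ℤ, z ≠ 0 → (Aᵀ).mulVec z ≠ 0 := by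
    intro z hz hAz
    apply hz
    obtain ⟨c, hc⟩ := hAsurj z
    have hdot : z ⬝ᵥ z = 0 := by
      calc z ⬝ᵥ z = z ⬝ᵥ (A.mulVec c) := by rw [hc]
        _ = (z ᵥ* A) ⬝ᵥ c := Matrix.dotProduct_mulVec z A c
        _ = ((Aᵀ).mulVec z) ⬝ᵥ c := by rw [Matrix.mulVec_transpose]
        _ = 0 := by rw [hAz, zero_dotProduct]
    exact dotProduct_self_eq_zero.mp hdot
  -- real versions
  set Gr : Matrix (Fin n) (Fin ρ) ℝ := G.map (fun z : ℤ => (z:ℝ)) with hGrdef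
  set Ar : Matrix (Fin ρ) (Fin m₂) ℝ := A.map (fun z : ℤ => (z:ℝ)) with hArdef
  set W : Matrix (Fin n₂) (Fin ρ) ℝ := B₂ * Arᵀ with hWdef
  have hGr_inj : ∀ v : Fin ρ → ℝ, v ≠ 0 → Gr.mulVec v ≠ 0 := real_inj_of_int_inj G hGinjZ
  have hAr_injT : ∀ v : Fin ρ → ℝ, v ≠ 0 → (Arᵀ).mulVec v ≠ 0 := by
    intro v hv
    have hh := real_inj_of_int_inj (Aᵀ) hATinjZ v hv
    rwa [Matrix.transpose_map] at hh
  have hW_inj : ∀ v : Fin ρ → ℝ, v ≠ 0 → W.mulVec v ≠ 0 := by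
    intro v hv hWv
    exact hAr_injT v hv (hB₂inj _ (by rw [Matrix.mulVec_mulVec]; exact hWv))
  have hΓPD : (Grᵀ * Gr).PosDef := posDef_gram Gr hGr_inj
  have hSPD : (Wᵀ * W).PosDef := posDef_gram W hW_inj
  have hcastz : ∀ z : Fin ρ → ℤ, z ≠ 0 → (fun k => (z k : ℝ)) ≠ (0 : Fin ρ → ℝ) := by
    intro z hz hc
    apply hz
    funext k
    have := congr_fun hc k
    rw [Pi.zero_apply] at this
    exact_mod_cast this
  -- minima of the two forms
  have hΓmin : ∀ z : Fin ρ → ℤ, z ≠ 0 →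
      (d:ℝ)^2 ≤ (fun k => (z k : ℝ)) ⬝ᵥ (Grᵀ * Gr).mulVec (fun k => (z k : ℝ)) := by
    intro z hz
    rw [quad_eq_sum_sq Gr (fun k => (z k : ℝ)), hGrdef, cast_mulVec G z]
    exact hM₀min (G.mulVec z) (hGmem z) (hGinjZ z hz)
  have hSmin : ∀ z : Fin ρ → ℤ, z ≠ 0 →
      l2^2 ≤ (fun k => (z k : ℝ)) ⬝ᵥ (Wᵀ * W).mulVec (fun k => (z k : ℝ)) := by
    intro z hz
    rw [quad_eq_sum_sq W (fun k => (z k : ℝ))]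
    have hWz : W.mulVec (fun k => (z k : ℝ))
        = B₂.mulVec (fun l => ((Aᵀ.mulVec z l : ℤ) : ℝ)) := by
      rw [hWdef, ← Matrix.mulVec_mulVec]
      congr 1
      rw [← cast_mulVec (Aᵀ) z, Matrix.transpose_map]
    rw [hWz]
    apply hl2sq (Aᵀ.mulVec z)
    rw [← hWz]
    exact hW_inj _ (hcastz z hz)
  -- the trace identity
  have hYGW : ∀ i j, Y (i, j) = ∑ k, Gr i k * W j k := by
    intro i j
    rw [hYC i j]
    have hC2 : ∀ l, ((C i l : ℤ):ℝ) = ∑ k, ((G i k : ℤ) : ℝ) * ((A k l : ℤ) : ℝ) := by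
      intro l
      rw [hCGA i l]
      push_cast
      rfl
    calc ∑ l, (C i l : ℝ) * B₂ j l
        = ∑ l, (∑ k, ((G i k : ℤ):ℝ) * ((A k l : ℤ):ℝ)) * B₂ j l := by
          apply Finset.sum_congr rfl; intro l _; rw [hC2 l]
      _ = ∑ l, ∑ k, ((G i k : ℤ):ℝ) * ((A k l : ℤ):ℝ) * B₂ j l := by
          apply Finset.sum_congr rfl; intro l _; rw [Finset.sum_mul]
      _ = ∑ k, ∑ l, ((G i k : ℤ):ℝ) * ((A k l : ℤ):ℝ) * B₂ j l := Finset.sum_comm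
      _ = ∑ k, Gr i k * W j k := by
          apply Finset.sum_congr rfl; intro k _
          rw [hWdef]
          simp only [Matrix.mul_apply, Matrix.transpose_apply, hGrdef, hArdef,
            Matrix.map_apply, Finset.mul_sum]
          apply Finset.sum_congr rfl; intro l _
          ring
  have htrace : ∑ p, (Y p)^2 = ((Grᵀ * Gr) * (Wᵀ * W)).trace := by
    rw [Fintype.sum_prod_type, ← sum_sq_eq_trace Gr W]
    apply Finset.sum_congr rfl; intro i _
    apply Finset.sum_congr rfl; intro j _
    rw [hYGW]
  -- put everything together
  have hdet1 := det_lower_of_int_min hρpos hΓPD (by positivity) hΓmin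
  have hdet2 := det_lower_of_int_min hρpos hSPD (by positivity) hSmin
  have hamgm := det_mul_det_le_trace_div_pow hρpos hΓPD hSPD.posSemidef
  have htr_nn : 0 ≤ ((Grᵀ * Gr) * (Wᵀ * W)).trace := htrace ▸ hsumY_nn
  have hρR : (0:ℝ) < ρ := by exact_mod_cast hρpos
  have hpow : (((d:ℝ)^2/ρ) * (l2^2/ρ))^ρ ≤ (((Grᵀ * Gr) * (Wᵀ * W)).trace/ρ)^ρ := by
    rw [mul_pow]
    calc ((d:ℝ)^2/ρ)^ρ * (l2^2/ρ)^ρ ≤ (Grᵀ * Gr).det * (Wᵀ * W).det := by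
          apply mul_le_mul hdet1 hdet2 (by positivity) (le_of_lt hΓPD.det_pos)
      _ ≤ _ := hamgm
  have hbase : ((d:ℝ)^2/ρ) * (l2^2/ρ) ≤ ((Grᵀ * Gr) * (Wᵀ * W)).trace/ρ :=
    le_of_pow_le_pow_left₀ hρpos.ne' (by positivity) hpow
  have htr_ge : (d:ℝ)^2 * l2^2 / ρ ≤ ((Grᵀ * Gr) * (Wᵀ * W)).trace := by
    have hmul := mul_le_mul_of_nonneg_right hbase (le_of_lt hρR)
    calc (d:ℝ)^2*l2^2/ρ = ((d:ℝ)^2/ρ) * (l2^2/ρ) * ρ := by field_simp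
      _ ≤ (((Grᵀ * Gr) * (Wᵀ * W)).trace/ρ) * ρ := hmul
      _ = ((Grᵀ * Gr) * (Wᵀ * W)).trace := by field_simp
  rw [← htrace] at htr_ge
  have hρd : (ρ:ℝ) ≤ (d:ℝ) := by
    have hTnn : (0:ℝ) ≤ T.card := Nat.cast_nonneg _
    nlinarith
  have hfinal : (d:ℝ) * l2^2 ≤ (d:ℝ)^2 * l2^2/ρ := by
    rw [le_div_iff₀ hρR]
    nlinarith [sq_nonneg l2, hd0, mul_le_mul_of_nonneg_left hρd
      (mul_nonneg hd0 (sq_nonneg l2))]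
  linarith
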